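/- Let z be a unit of ℤ/2ⁿℤ and a = (a₁, …, a_{2ν+2}) ∈ (ℤ/2ⁿℤ)^{2ν+2} with some coordinate a unit. If a₁a_{ν+1} + ⋯ + a_ν a_{2ν} + z·a_{2ν+1}² + a_{2ν+1}a_{2ν+2} + z·a_{2ν+2}² = 0, then a_i is a unit for some i ∈ {1, …, 2ν}. -/
import Mathlib

open Matrix

lemma unit_iff_cast_two (n : ℕ) (hn : 0 < n) (x : ZMod (2^n)) :
    IsUnit x ↔ IsUnit (ZMod.castHom (dvd_pow_self 2 hn.ne') (ZMod 2) x) := by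
  have h2 : NeZero (2^n) := ⟨by positivity⟩
  constructor
  · exact fun h => h.map _
  · intro h
    rw [ZMod.castHom_apply, ← ZMod.natCast_val, ZMod.isUnit_iff_coprime] at h
    have := (ZMod.isUnit_iff_coprime x.val (2^n)).mpr (h.pow_right n)
    rwa [ZMod.natCast_val, ZMod.cast_id] at this

theorem delta_two_isotropic_unit_coord (n ν : ℕ) (hn : 0 < n) (hν : 0 < ν)
    (z : ZMod (2^n)) (hz : IsUnit z)
    (a : Fin (2*ν+2) → ZMod (2^n)) (ha : ∃ i, IsUnit (a i))
    (hiso : (∑ i : Fin ν, a ⟨i.val, by have := i.isLt; omega⟩ *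
        a ⟨i.val + ν, by have := i.isLt; omega⟩)
      + z * a ⟨2*ν, by omega⟩ ^ 2 + a ⟨2*ν, by omega⟩ * a ⟨2*ν+1, by omega⟩
      + z * a ⟨2*ν+1, by omega⟩ ^ 2 = 0) :
    ∃ i : Fin (2*ν+2), i.val < 2*ν ∧ IsUnit (a i) := by
  by_contra hcon
  push_neg at hcon
  set φ := ZMod.castHom (dvd_pow_self 2 hn.ne') (ZMod 2) with hφ
  have key : ∀ x : ZMod (2^n), ¬ IsUnit x → φ x = 0 := by
    intro x hx
    by_contra h0
    exact hx ((unit_iff_cast_two n hn x).mpr (isUnit_iff_ne_zero.mpr h0))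
  have h2 := congrArg φ hiso
  simp only [_root_.map_add, _root_.map_mul, map_pow, map_sum, map_zero] at h2
  rw [Finset.sum_eq_zero (fun i _ => by
    rw [key _ (hcon ⟨i.val, by have := i.isLt; omega⟩ (by show i.val < 2*ν; have := i.isLt; omega)), zero_mul])] at h2
  have hzz : φ z ≠ 0 := isUnit_iff_ne_zero.mp (hz.map φ)
  have hbc : φ (a ⟨2*ν, by omega⟩) ≠ 0 ∨ φ (a ⟨2*ν+1, by omega⟩) ≠ 0 := by
    obtain ⟨i, hi⟩ := ha
    have hge : ¬ i.val < 2*ν := fun h => hcon i h hi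
    have hlt := i.isLt
    have : i.val = 2*ν ∨ i.val = 2*ν+1 := by omega
    rcases this with h | h
    · left
      have : i = ⟨2*ν, by omega⟩ := Fin.ext h
      rw [← this]
      exact isUnit_iff_ne_zero.mp (hi.map φ)
    · right
      have : i = ⟨2*ν+1, by omega⟩ := Fin.ext h
      rw [← this]
      exact isUnit_iff_ne_zero.mp (hi.map φ)
  have final : ∀ (zz b c : ZMod 2), zz ≠ 0 → (b ≠ 0 ∨ c ≠ 0) →
      0 + zz * b ^ 2 + b * c + zz * c ^ 2 ≠ 0 := by decide
  exact final _ _ _ hzz hbc h2
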